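/- Let u = u_n⋯u_1 and v = v_k⋯v_1 be words (indexed from the right). Then the q-binomial coefficient (u choose v)_q equals the sum over all sets Y = {y_k > ⋯ > y_1} ⊆ {1,…,n} with u_{y_k}⋯u_{y_1} = v of q raised to the power (y_1 + ⋯ + y_k) − k(k+1)/2. -/

import Mathlib

open Polynomial

/-- q-binomial on reversed words: first list = word with rightmost letter first,
matching the recursion (ua choose vb)_q = (u choose vb)_q * q^{|vb|} + [a=b](u choose v)_q. -/
noncomputable def qBaux {α : Type*} [DecidableEq α] : List α → List α → Polynomial ℕ
  | _, [] => 1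
  | [], _ :: _ => 0
  | a :: u, b :: v =>
      qBaux u (b :: v) * X ^ (v.length + 1) + if a = b then qBaux u v else 0

/-- q-binomial coefficient of words `u`, `v` given in natural reading order. -/
noncomputable def qB {α : Type*} [DecidableEq α] (u v : List α) : Polynomial ℕ :=
  qBaux u.reverse v.reverse


open Finset in
lemma sort_map_mono {n m : ℕ} (f : Fin n ↪ Fin m) (hf : Monotone f) (t : Finset (Fin n)) :
    (t.map f).sort (· ≤ ·) = (t.sort (· ≤ ·)).map f := by
  refine (fun hp h1 h2 => List.Perm.eq_of_pairwise' (r := (· ≤ ·)) h1 h2 hp) ?_ ?_ ?_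
  · rw [← Multiset.coe_eq_coe, Finset.sort_eq, Finset.map_val, ← Multiset.map_coe,
      Finset.sort_eq]
  · exact Finset.pairwise_sort _ _
  · exact List.Pairwise.map _ (fun a b hab => hf hab) (Finset.pairwise_sort t _)

lemma strictMono_le_apply' {K : ℕ} {f : Fin K → ℕ} (hf : StrictMono f) :
    ∀ m (hm : m < K), m ≤ f ⟨m, hm⟩ := by
  intro m
  induction m with
  | zero => intro hm; exact Nat.zero_le _
  | succ i ih =>
    intro hm
    have hi : i < K := Nat.lt_of_succ_lt hm
    have h1 := ih hi
    have h2 := hf (show (⟨i, hi⟩ : Fin K) < ⟨i + 1, hm⟩ from by simp [Fin.lt_def])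
    omega

lemma key_ineq {n : ℕ} (t : Finset (Fin n)) :
    t.card * (t.card + 1) / 2 ≤ ∑ i ∈ t, ((i : ℕ) + 1) := by
  classical
  set K := t.card with hK
  have hsum : ∑ i ∈ t, ((i : ℕ) + 1)
      = ∑ j : Fin K, (((t.orderIsoOfFin hK.symm j : Fin n) : ℕ) + 1) := by
    rw [← Finset.sum_coe_sort t (fun i => ((i : ℕ) + 1))]
    exact (Equiv.sum_comp (t.orderIsoOfFin hK.symm).toEquiv _).symm
  have hge : ∀ j : Fin K, (j : ℕ) ≤ ((t.orderIsoOfFin hK.symm j : Fin n) : ℕ) := by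
    intro j
    have hmono : StrictMono (fun j : Fin K => ((t.orderIsoOfFin hK.symm j : Fin n) : ℕ)) := by
      intro a b hab
      exact_mod_cast (t.orderIsoOfFin hK.symm).strictMono hab
    have := strictMono_le_apply' hmono j.1 j.2
    simpa using this
  have h1 : ∑ j : Fin K, ((j : ℕ) + 1)
      ≤ ∑ j : Fin K, (((t.orderIsoOfFin hK.symm j : Fin n) : ℕ) + 1) :=
    Finset.sum_le_sum (fun j _ => by have := hge j; omega)
  have h2 : ∑ j : Fin K, ((j : ℕ) + 1) = (∑ i ∈ Finset.range K, i) + K := by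
    rw [Fin.sum_univ_eq_sum_range (fun i => i + 1) K, Finset.sum_add_distrib]
    simp
  have h3 := Finset.sum_range_id_mul_two K
  have h4 : K * (K + 1) = K * (K - 1) + 2 * K := by
    cases K with
    | zero => rfl
    | succ k => simp [Nat.succ_sub_one]; ring
  rw [hsum]
  generalize hb : K * (K - 1) = b at h3 h4
  generalize hc : K * (K + 1) = c at h4
  omega

open Finset in
lemma sum_split {M : Type*} [AddCommMonoid M] {n : ℕ} (f : Finset (Fin (n + 1)) → M) :
    ∑ s : Finset (Fin (n + 1)), f s =
      (∑ t : Finset (Fin n), f (t.map ⟨Fin.succ, Fin.succ_injective n⟩)) +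
      ∑ t : Finset (Fin n), f (insert 0 (t.map ⟨Fin.succ, Fin.succ_injective n⟩)) := by
  classical
  set e : Fin n ↪ Fin (n + 1) := ⟨Fin.succ, Fin.succ_injective n⟩ with he
  have key : ∀ s : Finset (Fin (n + 1)),
      ((univ.filter (fun i : Fin n => i.succ ∈ s)).map e) = s.erase 0 := by
    intro s
    ext x
    simp only [mem_map, mem_filter, mem_univ, true_and, mem_erase, he,
      Function.Embedding.coeFn_mk]
    constructor
    · rintro ⟨i, hi, rfl⟩; exact ⟨Fin.succ_ne_zero i, hi⟩
    · rintro ⟨hx0, hxs⟩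
      refine ⟨x.pred hx0, ?_, Fin.succ_pred x hx0⟩
      rwa [Fin.succ_pred]
  have h0 : ∀ t : Finset (Fin n), (0 : Fin (n+1)) ∉ t.map e := by
    intro t
    simp [he, Fin.succ_ne_zero, eq_comm]
  rw [← Finset.sum_filter_add_sum_filter_not univ
    (fun s : Finset (Fin (n+1)) => (0 : Fin (n+1)) ∈ s)]
  rw [add_comm]
  congr 1
  · apply Finset.sum_nbij' (i := fun s => univ.filter (fun i : Fin n => i.succ ∈ s))
      (j := fun t => t.map e)
    · intro s hs; simp
    · intro t ht
      simp only [mem_filter, mem_univ, true_and]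
      exact h0 t
    · intro s hs
      simp only [mem_filter, mem_univ, true_and] at hs
      rw [key s, Finset.erase_eq_self.mpr hs]
    · intro t ht
      ext i
      simp [he]
    · intro s hs
      simp only [mem_filter, mem_univ, true_and] at hs
      rw [key s, Finset.erase_eq_self.mpr hs]
  · apply Finset.sum_nbij' (i := fun s => univ.filter (fun i : Fin n => i.succ ∈ s))
      (j := fun t => insert 0 (t.map e))
    · intro s hs; simp
    · intro t ht
      simp only [mem_filter, mem_univ, true_and]
      exact mem_insert_self _ _
    · intro s hs
      simp only [mem_filter, mem_univ, true_and] at hs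
      rw [key s, Finset.insert_erase hs]
    · intro t ht
      ext i
      simp [he, Fin.succ_ne_zero]
    · intro s hs
      simp only [mem_filter, mem_univ, true_and] at hs
      rw [key s, Finset.insert_erase hs]

theorem qBaux_eq {α : Type*} [DecidableEq α] (w : List α) : ∀ vr : List α,
    qBaux w vr = ∑ s : Finset (Fin w.length),
      if (s.sort (· ≤ ·)).map w.get = vr then
        X ^ ((∑ j ∈ s, ((j : ℕ) + 1)) - vr.length * (vr.length + 1) / 2)
      else 0 := by
  induction w with
  | nil =>
    intro vr
    cases vr with
    | nil =>
      rw [show qBaux ([] : List α) ([] : List α) = 1 from rfl]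
      symm
      rw [Finset.sum_eq_single ∅]
      · simp
      · intro s _ hs
        rw [if_neg]
        intro h
        apply hs
        have := congrArg List.length h
        simp only [List.length_map, Finset.length_sort, List.length_nil] at this
        exact Finset.card_eq_zero.mp this
      · simp
        rfl
    | cons b v' =>
      rw [show qBaux ([] : List α) (b :: v') = 0 from rfl]
      symm
      apply Finset.sum_eq_zero
      intro s _
      rw [if_neg]
      intro h
      have h1 := congrArg List.length h
      simp only [List.length_map, Finset.length_sort, List.length_cons] at h1
      have h2 := Finset.card_le_univ s
      simp only [Finset.card_univ, Fintype.card_fin, List.length_nil] at h2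
      omega
  | cons a w' ih =>
    intro vr
    cases vr with
    | nil =>
      rw [show qBaux (a :: w') ([] : List α) = 1 from rfl]
      symm
      rw [Finset.sum_eq_single ∅]
      · simp
      · intro s _ hs
        rw [if_neg]
        intro h
        apply hs
        have := congrArg List.length h
        simp only [List.length_map, Finset.length_sort, List.length_nil] at this
        exact Finset.card_eq_zero.mp this
      · simp
    | cons b v' =>
      rw [show qBaux (a :: w') (b :: v')
        = qBaux w' (b :: v') * X ^ (v'.length + 1)
          + if a = b then qBaux w' v' else 0 from rfl]
      rw [ih (b :: v'), ih v']
      simp only [List.length_cons]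
      rw [sum_split]
      set e : Fin w'.length ↪ Fin (w'.length + 1) := ⟨Fin.succ, Fin.succ_injective _⟩ with he
      have hemono : Monotone (e : Fin w'.length → Fin (w'.length + 1)) := by
        intro x y h
        simp only [he, Function.Embedding.coeFn_mk]
        exact Fin.succ_le_succ_iff.mpr h
      have hget : (a :: w').get ∘ (e : Fin w'.length → Fin (w'.length + 1)) = w'.get := by
        funext j
        simp [he, List.get_eq_getElem]
      have h0 : ∀ t : Finset (Fin w'.length), (0 : Fin (w'.length + 1)) ∉ t.map e := by
        intro t
        simp [he, Fin.succ_ne_zero, eq_comm]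
      have hpar : 2 ∣ v'.length * (v'.length + 1) := (Nat.even_mul_succ_self v'.length).two_dvd
      congr 1
      · -- no-zero part  ↔ qBaux w' (b::v') * X^(v'.length+1)
        rw [Finset.sum_mul]
        apply Finset.sum_congr rfl
        intro t _
        rw [sort_map_mono e hemono t, List.map_map, hget]
        rw [Finset.sum_map]
        simp only [he, Function.Embedding.coeFn_mk, Fin.val_succ]
        by_cases hc : (t.sort (· ≤ ·)).map w'.get = b :: v'
        · rw [if_pos hc, if_pos hc, ← pow_add]
          congr 1
          have hcard : t.card = v'.length + 1 := by
            have := congrArg List.length hc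
            simpa using this
          have hkey := key_ineq t
          rw [hcard] at hkey
          have hsum2 : ∑ j ∈ t, ((j : ℕ) + 1 + 1) = (∑ j ∈ t, ((j : ℕ) + 1)) + t.card := by
            rw [Finset.sum_add_distrib]
            simp
          rw [hsum2, hcard]
          have h4 : (v'.length + 1) * (v'.length + 1 + 1)
              = v'.length * (v'.length + 1) + 2 * (v'.length + 1) := by ring
          generalize hA : ∑ j ∈ t, ((j : ℕ) + 1) = A at hkey
          generalize hB : v'.length * (v'.length + 1) = B at h4 hpar
          generalize hC : (v'.length + 1) * (v'.length + 1 + 1) = C at h4 hkey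
          omega
        · rw [if_neg hc, if_neg hc, zero_mul]
      · -- zero part ↔ if a = b then qBaux w' v' else 0
        symm
        have hcomp : ∀ t : Finset (Fin w'.length),
            ((insert 0 (t.map e)).sort (· ≤ ·)).map (a :: w').get
              = a :: (t.sort (· ≤ ·)).map w'.get := by
          intro t
          have hsort : ((insert 0 (t.map e)).sort (· ≤ ·))
              = 0 :: ((t.map e).sort (· ≤ ·)) :=
            Finset.sort_insert _ (fun x _ => Fin.zero_le x) (h0 t)
          rw [hsort, sort_map_mono e hemono t, List.map_cons, List.map_map, hget]
          rfl
        by_cases hab : a = b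
        · rw [if_pos hab]
          apply Finset.sum_congr rfl
          intro t _
          rw [hcomp t, Finset.sum_insert (h0 t), Finset.sum_map]
          simp only [he, Function.Embedding.coeFn_mk, Fin.val_succ, Fin.val_zero]
          by_cases hc : (t.sort (· ≤ ·)).map w'.get = v'
          · rw [if_pos (by rw [hab, hc]), if_pos hc]
            congr 1
            have hcard : t.card = v'.length := by
              have := congrArg List.length hc
              simpa using this
            have hsum2 : ∑ j ∈ t, ((j : ℕ) + 1 + 1) = (∑ j ∈ t, ((j : ℕ) + 1)) + t.card := by
              rw [Finset.sum_add_distrib]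
              simp
            rw [hsum2, hcard]
            have h4 : (v'.length + 1) * (v'.length + 1 + 1)
                = v'.length * (v'.length + 1) + 2 * (v'.length + 1) := by ring
            generalize hA : ∑ j ∈ t, ((j : ℕ) + 1) = A
            generalize hB : v'.length * (v'.length + 1) = B at h4 hpar
            generalize hC : (v'.length + 1) * (v'.length + 1 + 1) = C at h4
            omega
          · rw [if_neg (fun h => hc (List.cons_eq_cons.mp h).2), if_neg hc]
        · rw [if_neg hab]
          apply Finset.sum_eq_zero
          intro t _
          rw [hcomp t]
          rw [if_neg (fun h => hab (List.cons_eq_cons.mp h).1)]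

lemma sort_map_anti {n m : ℕ} (f : Fin n ↪ Fin m) (hf : ∀ a b : Fin n, a ≤ b → f b ≤ f a)
    (t : Finset (Fin n)) :
    (t.map f).sort (· ≤ ·) = ((t.sort (· ≤ ·)).map f).reverse := by
  refine (fun hp h1 h2 => List.Perm.eq_of_pairwise' (r := (· ≤ ·)) h1 h2 hp) ?_ ?_ ?_
  · rw [← Multiset.coe_eq_coe, Finset.sort_eq, Finset.map_val, Multiset.coe_reverse,
      ← Multiset.map_coe, Finset.sort_eq]
  · exact Finset.pairwise_sort _ _
  · rw [List.pairwise_reverse]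
    exact List.Pairwise.map _ (fun a b hab => hf a b hab) (Finset.pairwise_sort t _)


/-- Positional formula: (u choose v)_q is the sum over occurrences Y of v in u
(Y a set of positions, counted from the right: position of the i-th letter from the left
of u, seen from the right, is u.length - i) of q^{s(Y) - k(k+1)/2}. -/
theorem stmt1 {α : Type*} [DecidableEq α] (u v : List α) :
    qB u v =
      ∑ s : Finset (Fin u.length),
        if (s.sort (· ≤ ·)).map u.get = v then
          X ^ ((∑ i ∈ s, (u.length - (i : ℕ))) - v.length * (v.length + 1) / 2)
        else 0 := by
  rw [qB, qBaux_eq]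
  classical
  have h : u.reverse.length = u.length := by simp
  set gE : Fin u.length ≃ Fin u.reverse.length :=
    ⟨fun i => Fin.cast h.symm i.rev, fun j => (Fin.cast h j).rev,
     fun i => by simp [Fin.rev_rev], fun j => by simp [Fin.rev_rev]⟩ with hgE
  have hanti : ∀ x y : Fin u.length, x ≤ y → gE.toEmbedding y ≤ gE.toEmbedding x := by
    intro x y hxy
    simp only [hgE, Equiv.coe_toEmbedding, Equiv.coe_fn_mk, Fin.le_def, Fin.coe_cast,
      Fin.val_rev]
    rw [Fin.le_def] at hxy
    omega
  have hgt : u.reverse.get ∘ (gE.toEmbedding : Fin u.length → Fin u.reverse.length) = u.get := by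
    funext i
    have hi := i.isLt
    simp only [hgE, Function.comp_apply, Equiv.coe_toEmbedding, Equiv.coe_fn_mk,
      List.get_eq_getElem, Fin.coe_cast, Fin.val_rev, List.getElem_reverse]
    congr 1
    omega
  refine (Fintype.sum_equiv gE.finsetCongr _ _ ?_).symm
  intro t
  rw [Equiv.finsetCongr_apply, sort_map_anti _ hanti t, List.map_reverse, List.map_map, hgt]
  have hexp : ∑ j ∈ t.map gE.toEmbedding, ((j : ℕ) + 1) = ∑ i ∈ t, (u.length - (i : ℕ)) := by
    rw [Finset.sum_map]
    apply Finset.sum_congr rfl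
    intro i _
    have hi := i.isLt
    simp only [hgE, Equiv.coe_toEmbedding, Equiv.coe_fn_mk, Fin.coe_cast, Fin.val_rev]
    omega
  rw [hexp]
  exact if_congr List.reverse_inj.symm (by rw [List.length_reverse]) rfl
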